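/- Let E be a real Banach space, let T₁ = [0,a] and T₂ = [0,b] be compact real intervals, and let H ⊆ C(T₁ × T₂, E) be a bounded family of functions that is (strongly) equicontinuous. Let H(x,y) = {h(x,y) : h ∈ H} for (x,y) ∈ T₁ × T₂, and let H(T₁×T₂) = ⋃_{(x,y)} H(x,y). Then β(H(T₁×T₂)) = sup{β(H(x,y)) : (x,y) ∈ T₁ × T₂}, where β is the De Blasi measure of weak noncompactness on E. -/
import Mathlib

open Metric Set Pointwise

/-- Weakly compact subset of a normed space: compact in the weak topology. -/
def IsWeaklyCompact {E : Type*} [NormedAddCommGroup E] [NormedSpace ℝ E] (C : Set E) : Prop :=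
  IsCompact (toWeakSpace ℝ E '' C)

/-- De Blasi measure of weak noncompactness. -/
noncomputable def deBlasi {E : Type*} [NormedAddCommGroup E] [NormedSpace ℝ E]
    (A : Set E) : ℝ :=
  sInf {t : ℝ | 0 < t ∧ ∃ C : Set E, IsWeaklyCompact C ∧
    A ⊆ C + t • Metric.closedBall (0 : E) 1}

section helpers
variable {E : Type*} [NormedAddCommGroup E] [NormedSpace ℝ E]

def betaSet (A : Set E) : Set ℝ :=
  {t : ℝ | 0 < t ∧ ∃ C : Set E, IsWeaklyCompact C ∧
    A ⊆ C + t • Metric.closedBall (0 : E) 1}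

lemma deBlasi_eq (A : Set E) : deBlasi A = sInf (betaSet A) := rfl

lemma betaSet_bddBelow (A : Set E) : BddBelow (betaSet A) :=
  ⟨0, fun _ ht => le_of_lt ht.1⟩

lemma deBlasi_nonneg (A : Set E) : 0 ≤ deBlasi A :=
  Real.sInf_nonneg (fun _ ht => le_of_lt ht.1)

lemma mem_smul_unit {u : ℝ} (hu : 0 < u) {z : E} (hz : ‖z‖ ≤ u) :
    z ∈ u • Metric.closedBall (0 : E) 1 := by
  refine ⟨u⁻¹ • z, ?_, ?_⟩
  · rw [Metric.mem_closedBall, dist_zero_right, norm_smul, norm_inv, Real.norm_eq_abs,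
      abs_of_pos hu]
    calc u⁻¹ * ‖z‖ ≤ u⁻¹ * u := by
          exact mul_le_mul_of_nonneg_left hz (inv_nonneg.2 hu.le)
      _ = 1 := inv_mul_cancel₀ hu.ne'
  · show u • u⁻¹ • z = z
    rw [smul_smul, mul_inv_cancel₀ hu.ne', one_smul]

lemma norm_le_of_mem_smul_unit {u : ℝ} (hu : 0 ≤ u) {z : E}
    (hz : z ∈ u • Metric.closedBall (0 : E) 1) : ‖z‖ ≤ u := by
  obtain ⟨y, hy, rfl⟩ := hz
  rw [Metric.mem_closedBall, dist_zero_right] at hy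
  rw [norm_smul, Real.norm_eq_abs, abs_of_nonneg hu]
  calc u * ‖y‖ ≤ u * 1 := mul_le_mul_of_nonneg_left hy hu
    _ = u := mul_one u

lemma smul_unit_mono {t u : ℝ} (ht : 0 ≤ t) (hu : 0 < u) (htu : t ≤ u) :
    t • Metric.closedBall (0 : E) 1 ⊆ u • Metric.closedBall (0 : E) 1 := by
  intro z hz
  exact mem_smul_unit hu (le_trans (norm_le_of_mem_smul_unit ht hz) htu)

lemma isWeaklyCompact_singleton (x : E) : IsWeaklyCompact ({x} : Set E) := by
  unfold IsWeaklyCompact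
  rw [Set.image_singleton]
  exact isCompact_singleton

lemma betaSet_nonempty {A : Set E} {M : ℝ} (hM : ∀ v ∈ A, ‖v‖ ≤ M) :
    (betaSet A).Nonempty := by
  refine ⟨max M 0 + 1, ⟨by positivity, {0}, isWeaklyCompact_singleton 0, ?_⟩⟩
  intro v hv
  refine ⟨0, rfl, v, mem_smul_unit (by positivity) ?_, zero_add v⟩
  calc ‖v‖ ≤ M := hM v hv
    _ ≤ max M 0 := le_max_left _ _
    _ ≤ max M 0 + 1 := by linarith

lemma deBlasi_le_of_cover {A C : Set E} {t : ℝ} (ht : 0 < t) (hC : IsWeaklyCompact C)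
    (h : A ⊆ C + t • Metric.closedBall (0 : E) 1) : deBlasi A ≤ t :=
  csInf_le (betaSet_bddBelow A) ⟨ht, C, hC, h⟩

lemma deBlasi_mono {A B : Set E} (h : A ⊆ B) (hB : (betaSet B).Nonempty) :
    deBlasi A ≤ deBlasi B :=
  csInf_le_csInf (betaSet_bddBelow A) hB
    (fun t ht => ⟨ht.1, ht.2.choose, ht.2.choose_spec.1, h.trans ht.2.choose_spec.2⟩)

end helpers

theorem ambrosetti_sup {E : Type*} [NormedAddCommGroup E] [NormedSpace ℝ E] [CompleteSpace E]
    (a b : ℝ) (ha : 0 < a) (hb : 0 < b)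
    (H : Set ((ℝ × ℝ) → E)) (hHne : H.Nonempty)
    (hcont : ∀ h ∈ H, ContinuousOn h (Set.Icc 0 a ×ˢ Set.Icc 0 b))
    (hbdd : ∃ M : ℝ, ∀ h ∈ H, ∀ p ∈ Set.Icc 0 a ×ˢ Set.Icc 0 b, ‖h p‖ ≤ M)
    (hequi : ∀ ε > (0:ℝ), ∃ δ > (0:ℝ), ∀ h ∈ H,
      ∀ p ∈ Set.Icc 0 a ×ˢ Set.Icc 0 b, ∀ q ∈ Set.Icc 0 a ×ˢ Set.Icc 0 b,
        ‖p - q‖ < δ → ‖h p - h q‖ < ε) :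
    deBlasi {v : E | ∃ h ∈ H, ∃ p ∈ Set.Icc 0 a ×ˢ Set.Icc (0:ℝ) b, h p = v} =
      sSup {r : ℝ | ∃ p ∈ Set.Icc 0 a ×ˢ Set.Icc (0:ℝ) b,
        r = deBlasi {v : E | ∃ h ∈ H, h p = v}} := by
  classical
  set K : Set (ℝ × ℝ) := Set.Icc 0 a ×ˢ Set.Icc (0:ℝ) b with hK
  set A : Set E := {v : E | ∃ h ∈ H, ∃ p ∈ K, h p = v} with hA
  set Hp : (ℝ × ℝ) → Set E := fun p => {v : E | ∃ h ∈ H, h p = v} with hHp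
  set Sset : Set ℝ := {r : ℝ | ∃ p ∈ K, r = deBlasi (Hp p)} with hSset
  obtain ⟨M, hM⟩ := hbdd
  have hz : ((0,0) : ℝ × ℝ) ∈ K := ⟨⟨le_refl 0, ha.le⟩, ⟨le_refl 0, hb.le⟩⟩
  have hAbd : ∀ v ∈ A, ‖v‖ ≤ M := by
    rintro v ⟨h, hh, p, hp, rfl⟩
    exact hM h hh p hp
  have hHpbd : ∀ p ∈ K, ∀ v ∈ Hp p, ‖v‖ ≤ M := by
    rintro p hp v ⟨h, hh, rfl⟩
    exact hM h hh p hp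
  have hAne : (betaSet A).Nonempty := betaSet_nonempty hAbd
  have hHpsub : ∀ p ∈ K, Hp p ⊆ A := by
    rintro p hp v ⟨h, hh, rfl⟩
    exact ⟨h, hh, p, hp, rfl⟩
  have hSne : Sset.Nonempty := ⟨deBlasi (Hp (0,0)), (0,0), hz, rfl⟩
  have hSbdd : BddAbove Sset := by
    refine ⟨deBlasi A, ?_⟩
    rintro r ⟨p, hp, rfl⟩
    exact deBlasi_mono (hHpsub p hp) hAne
  have hS0 : 0 ≤ sSup Sset :=
    le_trans (deBlasi_nonneg (Hp (0,0))) (le_csSup hSbdd ⟨(0,0), hz, rfl⟩)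
  apply le_antisymm
  · -- hard direction
    apply le_of_forall_pos_le_add
    intro ε hε
    set ε' := ε / 2 with hε'
    have hε'0 : 0 < ε' := by positivity
    obtain ⟨δ, hδ0, hδ⟩ := hequi ε' hε'0
    -- finite δ-net of K
    have hKcpt : IsCompact K := (isCompact_Icc).prod isCompact_Icc
    obtain ⟨s, hs⟩ := hKcpt.elim_finite_subcover (fun q : K => Metric.ball (q : ℝ × ℝ) δ)
      (fun q => Metric.isOpen_ball)
      (fun p hp => Set.mem_iUnion.2 ⟨⟨p, hp⟩, Metric.mem_ball_self hδ0⟩)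
    set S := sSup Sset with hSdef
    -- for each point, get a weakly compact set covering within S + ε'
    have key : ∀ q : ℝ × ℝ, q ∈ K → ∃ C : Set E, IsWeaklyCompact C ∧
        Hp q ⊆ C + (S + ε') • Metric.closedBall (0 : E) 1 := by
      intro q hq
      have h1 : deBlasi (Hp q) ≤ S := le_csSup hSbdd ⟨q, hq, rfl⟩
      have hne : (betaSet (Hp q)).Nonempty := betaSet_nonempty (hHpbd q hq)
      obtain ⟨t, ht, htlt⟩ := Real.lt_sInf_add_pos hne hε'0
      obtain ⟨ht0, C, hC, hcov⟩ := ht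
      refine ⟨C, hC, hcov.trans ?_⟩
      apply Set.add_subset_add_left
      refine smul_unit_mono ht0.le (by positivity) (by
        have : t < deBlasi (Hp q) + ε' := htlt
        linarith)
    choose C hCw hCcov using key
    set Cbig : Set E := ⋃ i : {x // x ∈ s}, C (i : K) (i : K).2 with hCbig
    have hCbigw : IsWeaklyCompact Cbig := by
      unfold IsWeaklyCompact
      rw [hCbig, Set.image_iUnion]
      exact isCompact_iUnion (fun i => hCw _ _)
    have hcover : A ⊆ Cbig + (S + ε) • Metric.closedBall (0 : E) 1 := by
      rintro v ⟨h, hh, p, hp, rfl⟩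
      have hpmem := hs hp
      rw [Set.mem_iUnion₂] at hpmem
      obtain ⟨i, hi, hpi⟩ := hpmem
      rw [Metric.mem_ball, dist_eq_norm] at hpi
      have hnear : ‖h p - h (i : ℝ × ℝ)‖ < ε' := hδ h hh p hp (i : ℝ × ℝ) i.2 hpi
      have : h (i : ℝ × ℝ) ∈ C i i.2 + (S + ε') • Metric.closedBall (0 : E) 1 :=
        hCcov i i.2 ⟨h, hh, rfl⟩
      rw [Set.mem_add] at this
      obtain ⟨c, hc, w, hw, hcw⟩ := this
      refine Set.mem_add.mpr ⟨c, Set.mem_iUnion.2 ⟨⟨i, hi⟩, hc⟩, w + (h p - h (i : ℝ × ℝ)),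
        mem_smul_unit (by linarith) ?_, by rw [← add_assoc, hcw]; abel⟩
      have hwn : ‖w‖ ≤ S + ε' := norm_le_of_mem_smul_unit (by linarith) hw
      calc ‖w + (h p - h (i : ℝ × ℝ))‖ ≤ ‖w‖ + ‖h p - h (i : ℝ × ℝ)‖ := norm_add_le _ _
        _ ≤ (S + ε') + ε' := by linarith
        _ = S + ε := by rw [hε']; ring
    exact deBlasi_le_of_cover (by linarith) hCbigw hcover
  · exact csSup_le hSne (by rintro r ⟨p, hp, rfl⟩; exact deBlasi_mono (hHpsub p hp) hAne)
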